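/- Let g(w) = η ln(∑_{i=1}^n exp(w_i/η)) for η > 0. Then ∇g is (1/η)-Lipschitz from (ℝ^n, ‖·‖_∞) to (ℝ^n, ‖·‖₁): ‖∇g(w) − ∇g(w')‖₁ ≤ (1/η)‖w − w'‖_∞ for all w, w' ∈ ℝ^n. -/

import Mathlib

open Real Finset

lemma sinh_le_mul_cosh (s : ℝ) (hs : 0 ≤ s) : Real.sinh s ≤ s * Real.cosh s := by
  set f : ℝ → ℝ := fun x => x * Real.cosh x - Real.sinh x with hf
  have hd : ∀ x : ℝ, HasDerivAt f (x * Real.sinh x) x := by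
    intro x
    have h1 : HasDerivAt (fun x : ℝ => x * Real.cosh x)
        (1 * Real.cosh x + x * Real.sinh x) x :=
      (hasDerivAt_id x).mul (Real.hasDerivAt_cosh x)
    have h2 := Real.hasDerivAt_sinh x
    have := h1.sub h2
    rw [show x * Real.sinh x = 1 * Real.cosh x + x * Real.sinh x - Real.cosh x by ring]
    exact this
  have hmono : MonotoneOn f (Set.Ici (0:ℝ)) := by
    apply monotoneOn_of_deriv_nonneg (convex_Ici 0)
    · exact (Differentiable.continuous (fun x => (hd x).differentiableAt)).continuousOn
    · exact fun x _ => ((hd x).differentiableAt).differentiableWithinAt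
    · intro x hx
      rw [(hd x).deriv]
      have hx' : 0 ≤ x := le_of_lt (by simpa using hx)
      have : Real.sinh 0 ≤ Real.sinh x := Real.sinh_le_sinh.mpr hx'
      simp only [Real.sinh_zero] at this
      exact mul_nonneg hx' this
  have h0 : f 0 = 0 := by simp [hf]
  have := hmono (Set.mem_Ici.2 le_rfl) (Set.mem_Ici.2 hs) hs
  rw [h0] at this
  have h2 : (0:ℝ) ≤ s * Real.cosh s - Real.sinh s := this
  linarith

lemma two_cosh_le (t : ℝ) (ht : 0 ≤ t) :
    2 * (Real.exp t + Real.exp (-t) - 2) ≤ t * (Real.exp t - Real.exp (-t)) := by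
  have h := sinh_le_mul_cosh (t/2) (by linarith)
  rw [Real.sinh_eq, Real.cosh_eq] at h
  set u := Real.exp (t/2) with hu
  set v := Real.exp (-(t/2)) with hv
  have huv : u * v = 1 := by rw [hu, hv, ← Real.exp_add]; simp
  have h1 : Real.exp t = u * u := by rw [hu, ← Real.exp_add]; ring_nf
  have h2 : Real.exp (-t) = v * v := by rw [hv, ← Real.exp_add]; ring_nf
  have h3 : v ≤ u := Real.exp_le_exp.mpr (by linarith)
  rw [h1, h2]
  nlinarith [sq_nonneg (u - v), mul_nonneg ht (sq_nonneg (u - v))]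

set_option maxHeartbeats 1000000 in
lemma tv_bound {n : ℕ} (hn : 0 < n) (a b : Fin n → ℝ) (ha : ∀ i, 0 < a i) (hb : ∀ i, 0 < b i)
    (c C t : ℝ) (hc : 0 < c) (hcC : c < C) (hcc : C * c = 1)
    (hlb : ∀ i, c * b i ≤ a i) (hub : ∀ i, a i ≤ C * b i)
    (ht : 2 * (C + c - 2) ≤ t * (C - c)) :
    ∑ i, |a i / (∑ j, a j) - b i / (∑ j, b j)| ≤ t := by
  have : Nonempty (Fin n) := ⟨⟨0, hn⟩⟩
  set A := ∑ j, a j with hAdef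
  set B := ∑ j, b j with hBdef
  clear_value A B
  have hA : 0 < A := by rw [hAdef]; exact Finset.sum_pos (fun i _ => ha i) Finset.univ_nonempty
  have hB : 0 < B := by rw [hBdef]; exact Finset.sum_pos (fun i _ => hb i) Finset.univ_nonempty
  have hAB : 0 < A * B := mul_pos hA hB
  have hACB : A ≤ C * B := by
    rw [hAdef, hBdef]
    calc (∑ j, a j) ≤ ∑ j, C * b j := Finset.sum_le_sum (fun i _ => hub i)
    _ = C * (∑ j, b j) := by rw [← Finset.mul_sum]
  have hcBA : c * B ≤ A := by
    rw [hAdef, hBdef]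
    calc c * (∑ j, b j) = ∑ j, c * b j := by rw [← Finset.mul_sum]
    _ ≤ ∑ j, a j := Finset.sum_le_sum (fun i _ => hlb i)
  set p : Fin n → Prop := fun i => b i / B ≤ a i / A with hp
  have hzero : ∑ i, (a i / A - b i / B) = 0 := by
    rw [Finset.sum_sub_distrib, ← Finset.sum_div, ← Finset.sum_div, ← hAdef, ← hBdef,
      div_self hA.ne', div_self hB.ne', sub_self]
  set S := ∑ i ∈ Finset.univ.filter p, (a i / A - b i / B) with hSdef
  clear_value S
  set S2 := ∑ i ∈ Finset.univ.filter (fun i => ¬ p i), (b i / B - a i / A) with hS2def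
  clear_value S2
  have hS2 : S2 = S := by
    have h1 := Finset.sum_filter_add_sum_filter_not Finset.univ p (fun i => a i / A - b i / B)
    rw [hzero] at h1
    have h2 : S2 = - ∑ i ∈ Finset.univ.filter (fun i => ¬ p i), (a i / A - b i / B) := by
      rw [hS2def, ← Finset.sum_neg_distrib]
      exact Finset.sum_congr rfl fun i _ => (neg_sub _ _).symm
    rw [h2]
    linarith
  have habs : ∑ i, |a i / A - b i / B| = S + S2 := by
    rw [hSdef, hS2def,
      ← Finset.sum_filter_add_sum_filter_not Finset.univ p (fun i => |a i / A - b i / B|)]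
    congr 1
    · exact Finset.sum_congr rfl fun i hi =>
        abs_of_nonneg (sub_nonneg.mpr (Finset.mem_filter.mp hi).2)
    · refine Finset.sum_congr rfl fun i hi => ?_
      have h3 : ¬ p i := (Finset.mem_filter.mp hi).2
      have h4 : a i / A ≤ b i / B := le_of_lt (lt_of_not_ge h3)
      rw [abs_of_nonpos (sub_nonpos.mpr h4), neg_sub]
  set u := ∑ i ∈ Finset.univ.filter p, b i with hudef
  clear_value u
  set u' := ∑ i ∈ Finset.univ.filter (fun i => ¬ p i), b i with hu'def
  clear_value u'
  have huu' : u + u' = B := by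
    rw [hudef, hu'def]
    exact (Finset.sum_filter_add_sum_filter_not Finset.univ p b).trans hBdef.symm
  set α := C * B - A with hαdef
  clear_value α
  set β := A - c * B with hβdef
  clear_value β
  have hα : 0 ≤ α := by rw [hαdef]; linarith
  have hβ : 0 ≤ β := by rw [hβdef]; linarith
  have hbound1 : S ≤ u * (α / (A * B)) := by
    rw [hSdef, hudef, Finset.sum_mul]
    refine Finset.sum_le_sum fun i _ => ?_
    rw [div_sub_div _ _ hA.ne' hB.ne', mul_div_assoc']
    gcongr
    rw [hαdef]
    nlinarith [mul_le_mul_of_nonneg_right (hub i) hB.le]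
  have hbound2 : S ≤ u' * (β / (A * B)) := by
    rw [← hS2, hS2def, hu'def, Finset.sum_mul]
    refine Finset.sum_le_sum fun i _ => ?_
    rw [div_sub_div _ _ hB.ne' hA.ne', mul_comm B A, mul_div_assoc']
    gcongr
    rw [hβdef]
    nlinarith [mul_le_mul_of_nonneg_right (hlb i) hB.le]
  have hu : 0 ≤ u := by
    rw [hudef]; exact Finset.sum_nonneg fun i _ => (hb i).le
  have hu' : 0 ≤ u' := by
    rw [hu'def]; exact Finset.sum_nonneg fun i _ => (hb i).le
  have hmain : S * ((C - c) * B) ≤ α * β / A := by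
    have h1 : S * β ≤ (u * (α / (A * B))) * β := mul_le_mul_of_nonneg_right hbound1 hβ
    have h2 : S * α ≤ (u' * (β / (A * B))) * α := mul_le_mul_of_nonneg_right hbound2 hα
    have h3 : S * ((C - c) * B) = S * β + S * α := by rw [hαdef, hβdef]; ring
    have hu'eq : u' = B - u := by linarith
    have h4 : (u * (α / (A * B))) * β + (u' * (β / (A * B))) * α = α * β / A := by
      rw [hu'eq]
      field_simp
      ring
    linarith
  have hccB : C * c * B ^ 2 = B ^ 2 := by rw [hcc]; ring
  have hαβ : α * β ≤ (C + c - 2) * (A * B) := by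
    rw [hαdef, hβdef]
    nlinarith [sq_nonneg (A - B), hccB]
  have hfin : S * ((C - c) * B) ≤ (C + c - 2) * B := by
    refine hmain.trans ?_
    rw [div_le_iff₀ hA]
    calc α * β ≤ (C + c - 2) * (A * B) := hαβ
    _ = (C + c - 2) * B * A := by ring
  have hCc : 0 < C - c := by linarith
  have hS : 2 * S ≤ t := by
    have h5 : S * (C - c) ≤ C + c - 2 := by
      have := hfin
      nlinarith
    nlinarith
  rw [habs, hS2]
  linarith

theorem stmt_19 (n : ℕ) (η : ℝ) (hη : 0 < η) (w w' : Fin n → ℝ) :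
    ∑ i, |Real.exp (w i / η) / (∑ j, Real.exp (w j / η)) -
          Real.exp (w' i / η) / (∑ j, Real.exp (w' j / η))|
      ≤ (1 / η) * ‖w - w'‖ := by
  rcases Nat.eq_zero_or_pos n with rfl | hn
  · simp
    positivity
  rcases eq_or_ne w w' with rfl | hne
  · simp
  have hwpos : 0 < ‖w - w'‖ := norm_pos_iff.mpr (sub_ne_zero.mpr hne)
  set t := ‖w - w'‖ / η with htdef
  have htpos : 0 < t := div_pos hwpos hη
  have hbd : ∀ i, |w i - w' i| ≤ ‖w - w'‖ := by
    intro i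
    have := norm_le_pi_norm (w - w') i
    simpa [Real.norm_eq_abs] using this
  have hub : ∀ i, Real.exp (w i / η) ≤ Real.exp t * Real.exp (w' i / η) := by
    intro i
    rw [← Real.exp_add]
    apply Real.exp_le_exp.mpr
    have h1 : (w i - w' i) / η ≤ t := by
      rw [htdef]
      gcongr
      exact le_trans (le_abs_self _) (hbd i)
    have h2 : w i / η - w' i / η = (w i - w' i) / η := by ring
    linarith
  have hlb : ∀ i, Real.exp (-t) * Real.exp (w' i / η) ≤ Real.exp (w i / η) := by
    intro i
    rw [← Real.exp_add]
    apply Real.exp_le_exp.mpr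
    have h1 : -t ≤ (w i - w' i) / η := by
      rw [htdef, ← neg_div]
      gcongr
      have h3 := hbd i
      have h4 := neg_abs_le (w i - w' i)
      linarith
    have h2 : w i / η - w' i / η = (w i - w' i) / η := by ring
    linarith
  have hmain := tv_bound hn (fun i => Real.exp (w i / η)) (fun i => Real.exp (w' i / η))
    (fun i => Real.exp_pos _) (fun i => Real.exp_pos _)
    (Real.exp (-t)) (Real.exp t) t (Real.exp_pos _)
    (Real.exp_lt_exp.mpr (by linarith)) (by rw [← Real.exp_add]; simp)
    hlb hub (two_cosh_le t htpos.le)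
  calc ∑ i, |Real.exp (w i / η) / (∑ j, Real.exp (w j / η)) -
          Real.exp (w' i / η) / (∑ j, Real.exp (w' j / η))| ≤ t := hmain
  _ = (1 / η) * ‖w - w'‖ := by rw [htdef]; ring
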